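/- Let Q₀ be a probability measure on ℝ^d whose support is contained in the closed ball of radius R centered at the origin, and let σ > 0. Define q_σ(x) := ∫_{ℝ^d} exp(−|x−y|²/(2σ²)) dQ₀(y) and g(x) := log q_σ(x) + |x|²/(2σ²). Then g is twice differentiable on ℝ^d and for every x, ‖∇²g(x)‖ ≤ 2R²/σ⁴. (Hessian bound of Theorem 3.8 for the Gaussian smoothing of a bounded-support distribution.) -/

import Mathlib

open MeasureTheory Real

noncomputable section

open InnerProductSpace RealInnerProductSpace
set_option synthInstance.maxHeartbeats 1000000
set_option maxHeartbeats 1000000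
set_option linter.unusedSectionVars false
set_option linter.unusedVariables false

namespace Stmt5


variable {d : ℕ}
local notation "E" => EuclideanSpace ℝ (Fin d)

def K (σ : ℝ) (x y : EuclideanSpace ℝ (Fin d)) : ℝ :=
  Real.exp ((⟪x, y⟫_ℝ - ‖y‖ ^ 2 / 2) / σ ^ 2)

lemma K_pos (σ : ℝ) (x y : E) : 0 < K σ x y := Real.exp_pos _

lemma hasFDerivAt_K (σ : ℝ) (y x : E) :
    HasFDerivAt (fun x => K σ x y) ((K σ x y / σ ^ 2) • innerSL ℝ y) x := by
  have h1 : HasFDerivAt (fun x : E => ⟪x, y⟫_ℝ) (innerSL ℝ y) x := by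
    have he : (fun x : E => ⟪x, y⟫_ℝ) = ⇑(innerSL ℝ y) := funext fun v => by rw [innerSL_apply_apply, real_inner_comm]
    rw [he]; exact (innerSL ℝ y).hasFDerivAt
  have h0 : HasFDerivAt (fun x : E => (⟪x, y⟫_ℝ - ‖y‖ ^ 2 / 2) / σ ^ 2)
      ((σ ^ 2)⁻¹ • innerSL ℝ y) x := by
    have := (h1.sub_const (‖y‖ ^ 2 / 2)).const_mul ((σ ^ 2)⁻¹)
    have he : (fun x : E => (σ ^ 2)⁻¹ * (⟪x, y⟫_ℝ - ‖y‖ ^ 2 / 2))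
        = fun x : E => (⟪x, y⟫_ℝ - ‖y‖ ^ 2 / 2) / σ ^ 2 := by
      funext v; ring
    rwa [he] at this
  have := h0.exp
  simp only [K] at this ⊢
  rwa [smul_smul, ← div_eq_mul_inv] at this

lemma continuous_K (σ : ℝ) (x : E) : Continuous (fun y => K σ x y) := by
  exact Real.continuous_exp.comp
    ((((innerSL ℝ x).continuous).sub ((continuous_norm.pow 2).div_const 2)).div_const _)

lemma K_le (σ : ℝ) (hσ : 0 < σ) {x y : E} {M : ℝ} (hx : ‖x‖ ≤ M) {R : ℝ} (hy : ‖y‖ ≤ R) :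
    K σ x y ≤ Real.exp (M * R / σ ^ 2) := by
  have hM : 0 ≤ M := le_trans (norm_nonneg x) hx
  apply Real.exp_le_exp.2
  have h1 : ⟪x, y⟫_ℝ ≤ M * R :=
    le_trans (real_inner_le_norm x y) (mul_le_mul hx hy (norm_nonneg y) hM)
  have h2 : (⟪x, y⟫_ℝ - ‖y‖ ^ 2 / 2) ≤ M * R := by nlinarith [sq_nonneg (‖y‖)]
  have hs2 : (0:ℝ) < σ ^ 2 := by positivity
  gcongr

lemma le_K (σ : ℝ) (hσ : 0 < σ) {x y : E} {R : ℝ} (hy : ‖y‖ ≤ R) :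
    Real.exp (-(‖x‖ * R + R ^ 2 / 2) / σ ^ 2) ≤ K σ x y := by
  apply Real.exp_le_exp.2
  have hR : 0 ≤ R := le_trans (norm_nonneg y) hy
  have h1 : -(‖x‖ * R) ≤ ⟪x, y⟫_ℝ := by
    have := neg_le_of_abs_le (abs_real_inner_le_norm x y)
    have h2 : ‖x‖ * ‖y‖ ≤ ‖x‖ * R := mul_le_mul_of_nonneg_left hy (norm_nonneg x)
    linarith
  have h2 : ‖y‖ ^ 2 ≤ R ^ 2 := by nlinarith [norm_nonneg y]
  have hs2 : (0:ℝ) < σ ^ 2 := by positivity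
  gcongr
  linarith

lemma smul_innerSL (c : ℝ) (y : E) : c • innerSL ℝ y = innerSL ℝ (c • y) := by
  ext v
  simp [real_inner_smul_left]

variable (Q₀ : Measure (EuclideanSpace ℝ (Fin d))) [IsProbabilityMeasure Q₀] (σ R : ℝ)

def F (x : E) : ℝ := ∫ y, K σ x y ∂Q₀
def G (x : E) : E := ∫ y, K σ x y • y ∂Q₀
def LF (x : E) : E →L[ℝ] ℝ := ∫ y, (K σ x y / σ ^ 2) • innerSL ℝ y ∂Q₀
def LG (x : E) : E →L[ℝ] E := ∫ y, ((K σ x y / σ ^ 2) • innerSL ℝ y).smulRight y ∂Q₀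

variable {σ R}

lemma intK (hσ : 0 < σ) (hae : ∀ᵐ y ∂Q₀, ‖y‖ ≤ R) (x : E) :
    Integrable (fun y => K σ x y) Q₀ := by
  refine Integrable.mono' (integrable_const (Real.exp (‖x‖ * R / σ ^ 2)))
    ((continuous_K σ x).aestronglyMeasurable) ?_
  filter_upwards [hae] with y hy
  rw [Real.norm_eq_abs, abs_of_pos (K_pos σ x y)]
  exact K_le σ hσ le_rfl hy

lemma intKy (hσ : 0 < σ) (hae : ∀ᵐ y ∂Q₀, ‖y‖ ≤ R) (x : E) :
    Integrable (fun y => K σ x y • y) Q₀ := by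
  refine Integrable.mono' (integrable_const (Real.exp (‖x‖ * R / σ ^ 2) * R))
    (((continuous_K σ x).smul continuous_id).aestronglyMeasurable) ?_
  filter_upwards [hae] with y hy
  rw [norm_smul, Real.norm_eq_abs, abs_of_pos (K_pos σ x y)]
  exact mul_le_mul (K_le σ hσ le_rfl hy) hy (norm_nonneg y) (Real.exp_pos _).le

lemma intLF (hσ : 0 < σ) (hae : ∀ᵐ y ∂Q₀, ‖y‖ ≤ R) (x : E) :
    Integrable (fun y => (K σ x y / σ ^ 2) • innerSL ℝ y) Q₀ := by
  refine Integrable.mono' (integrable_const (Real.exp (‖x‖ * R / σ ^ 2) / σ ^ 2 * R))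
    ((((continuous_K σ x).div_const _).smul (innerSL ℝ).continuous).aestronglyMeasurable) ?_
  filter_upwards [hae] with y hy
  rw [smul_innerSL _ y,
    innerSL_apply_norm, norm_smul, Real.norm_eq_abs,
    abs_of_pos (div_pos (K_pos σ x y) (by positivity))]
  exact mul_le_mul (by gcongr; exact K_le σ hσ le_rfl hy) hy (norm_nonneg y) (by positivity)

lemma contLG (x : E) :
    Continuous (fun y : E => ((K σ x y / σ ^ 2) • innerSL ℝ y).smulRight y) := by
  exact (isBoundedBilinearMap_smulRight (𝕜 := ℝ)).continuous.comp
    ((((continuous_K σ x).div_const _).smul (innerSL ℝ).continuous).prodMk continuous_id)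

lemma intLG (hσ : 0 < σ) (hae : ∀ᵐ y ∂Q₀, ‖y‖ ≤ R) (hR : 0 ≤ R) (x : E) :
    Integrable (fun y => ((K σ x y / σ ^ 2) • innerSL ℝ y).smulRight y) Q₀ := by
  refine Integrable.mono' (integrable_const (Real.exp (‖x‖ * R / σ ^ 2) / σ ^ 2 * R * R))
    (contLG x).aestronglyMeasurable ?_
  filter_upwards [hae] with y hy
  rw [ContinuousLinearMap.norm_smulRight_apply,
    smul_innerSL _ y,
    innerSL_apply_norm, norm_smul, Real.norm_eq_abs,
    abs_of_pos (div_pos (K_pos σ x y) (by positivity))]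
  have h1 : K σ x y / σ ^ 2 * ‖y‖ ≤ Real.exp (‖x‖ * R / σ ^ 2) / σ ^ 2 * R :=
    mul_le_mul (by gcongr; exact K_le σ hσ le_rfl hy) hy (norm_nonneg y)
      (by positivity)
  exact mul_le_mul h1 hy (norm_nonneg y) (by positivity)

lemma hasFDerivAt_F (hσ : 0 < σ) (hae : ∀ᵐ y ∂Q₀, ‖y‖ ≤ R) (hR : 0 ≤ R) (x₀ : E) :
    HasFDerivAt (F Q₀ σ) (LF Q₀ σ x₀) x₀ := by
  refine hasFDerivAt_integral_of_dominated_of_fderiv_le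
    (F' := fun x y => (K σ x y / σ ^ 2) • innerSL ℝ y)
    (bound := fun _ => Real.exp ((‖x₀‖ + 1) * R / σ ^ 2) / σ ^ 2 * R)
    (Metric.ball_mem_nhds x₀ one_pos)
    (Filter.Eventually.of_forall fun x => (continuous_K σ x).aestronglyMeasurable)
    (intK Q₀ hσ hae x₀)
    ((((continuous_K σ x₀).div_const _).smul (innerSL ℝ).continuous).aestronglyMeasurable)
    ?_ (integrable_const _)
    (Filter.Eventually.of_forall fun y x _ => hasFDerivAt_K σ y x)
  filter_upwards [hae] with y hy x hx
  have hxn : ‖x‖ ≤ ‖x₀‖ + 1 := by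
    have := mem_ball_iff_norm.1 hx
    have h2 := norm_sub_norm_le x x₀
    linarith
  rw [smul_innerSL _ y,
    innerSL_apply_norm, norm_smul, Real.norm_eq_abs,
    abs_of_pos (div_pos (K_pos σ x y) (by positivity))]
  exact mul_le_mul (by gcongr; exact K_le σ hσ hxn hy) hy (norm_nonneg y) (by positivity)

lemma hasFDerivAt_G (hσ : 0 < σ) (hae : ∀ᵐ y ∂Q₀, ‖y‖ ≤ R) (hR : 0 ≤ R) (x₀ : E) :
    HasFDerivAt (G Q₀ σ) (LG Q₀ σ x₀) x₀ := by
  refine hasFDerivAt_integral_of_dominated_of_fderiv_le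
    (F' := fun x y => ((K σ x y / σ ^ 2) • innerSL ℝ y).smulRight y)
    (bound := fun _ => Real.exp ((‖x₀‖ + 1) * R / σ ^ 2) / σ ^ 2 * R * R)
    (Metric.ball_mem_nhds x₀ one_pos)
    (Filter.Eventually.of_forall fun x =>
      ((continuous_K σ x).smul continuous_id).aestronglyMeasurable)
    (intKy Q₀ hσ hae x₀)
    (contLG x₀).aestronglyMeasurable
    ?_ (integrable_const _)
    (Filter.Eventually.of_forall fun y x _ => (hasFDerivAt_K σ y x).smul_const y)
  filter_upwards [hae] with y hy x hx
  have hxn : ‖x‖ ≤ ‖x₀‖ + 1 := by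
    have := mem_ball_iff_norm.1 hx
    have h2 := norm_sub_norm_le x x₀
    linarith
  rw [ContinuousLinearMap.norm_smulRight_apply,
    smul_innerSL _ y,
    innerSL_apply_norm, norm_smul, Real.norm_eq_abs,
    abs_of_pos (div_pos (K_pos σ x y) (by positivity))]
  have h1 : K σ x y / σ ^ 2 * ‖y‖ ≤ Real.exp ((‖x₀‖ + 1) * R / σ ^ 2) / σ ^ 2 * R :=
    mul_le_mul (by gcongr; exact K_le σ hσ hxn hy) hy (norm_nonneg y)
      (by positivity)
  exact mul_le_mul h1 hy (norm_nonneg y) (by positivity)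

lemma F_pos (hσ : 0 < σ) (hae : ∀ᵐ y ∂Q₀, ‖y‖ ≤ R) (x : E) : 0 < F Q₀ σ x := by
  have h1 : Real.exp (-(‖x‖ * R + R ^ 2 / 2) / σ ^ 2) ≤ F Q₀ σ x := by
    have := integral_mono_ae (integrable_const _) (intK Q₀ hσ hae x)
      (hae.mono fun y hy => le_K σ hσ hy)
    simpa [F] using this
  exact lt_of_lt_of_le (Real.exp_pos _) h1

lemma norm_G_le (hσ : 0 < σ) (hae : ∀ᵐ y ∂Q₀, ‖y‖ ≤ R) (x : E) :
    ‖G Q₀ σ x‖ ≤ R * F Q₀ σ x := by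
  refine (norm_integral_le_integral_norm _).trans ?_
  have h1 : ∫ y, ‖K σ x y • y‖ ∂Q₀ ≤ ∫ y, R * K σ x y ∂Q₀ := by
    refine integral_mono_ae (intKy Q₀ hσ hae x).norm ((intK Q₀ hσ hae x).const_mul R) ?_
    filter_upwards [hae] with y hy
    rw [norm_smul, Real.norm_eq_abs, abs_of_pos (K_pos σ x y)]
    rw [mul_comm R]
    exact mul_le_mul_of_nonneg_left hy (K_pos σ x y).le
  simpa [integral_const_mul, F] using h1

lemma norm_LF_le (hσ : 0 < σ) (hae : ∀ᵐ y ∂Q₀, ‖y‖ ≤ R) (x : E) :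
    ‖LF Q₀ σ x‖ ≤ R / σ ^ 2 * F Q₀ σ x := by
  refine (norm_integral_le_integral_norm _).trans ?_
  have h1 : ∫ y, ‖(K σ x y / σ ^ 2) • innerSL ℝ y‖ ∂Q₀
      ≤ ∫ y, R / σ ^ 2 * K σ x y ∂Q₀ := by
    refine integral_mono_ae (intLF Q₀ hσ hae x).norm ((intK Q₀ hσ hae x).const_mul _) ?_
    filter_upwards [hae] with y hy
    rw [smul_innerSL _ y,
      innerSL_apply_norm, norm_smul, Real.norm_eq_abs,
      abs_of_pos (div_pos (K_pos σ x y) (by positivity))]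
    calc K σ x y / σ ^ 2 * ‖y‖ ≤ K σ x y / σ ^ 2 * R := by
          exact mul_le_mul_of_nonneg_left hy (div_pos (K_pos σ x y) (by positivity)).le
      _ = R / σ ^ 2 * K σ x y := by ring
  simpa [integral_const_mul, F] using h1

lemma norm_LG_le (hσ : 0 < σ) (hae : ∀ᵐ y ∂Q₀, ‖y‖ ≤ R) (hR : 0 ≤ R) (x : E) :
    ‖LG Q₀ σ x‖ ≤ R ^ 2 / σ ^ 2 * F Q₀ σ x := by
  refine (norm_integral_le_integral_norm _).trans ?_
  have h1 : ∫ y, ‖((K σ x y / σ ^ 2) • innerSL ℝ y).smulRight y‖ ∂Q₀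
      ≤ ∫ y, R ^ 2 / σ ^ 2 * K σ x y ∂Q₀ := by
    refine integral_mono_ae (intLG Q₀ hσ hae hR x).norm ((intK Q₀ hσ hae x).const_mul _) ?_
    filter_upwards [hae] with y hy
    rw [ContinuousLinearMap.norm_smulRight_apply,
      smul_innerSL _ y,
      innerSL_apply_norm, norm_smul, Real.norm_eq_abs,
      abs_of_pos (div_pos (K_pos σ x y) (by positivity))]
    calc K σ x y / σ ^ 2 * ‖y‖ * ‖y‖ ≤ K σ x y / σ ^ 2 * R * R := by
          have hk : (0:ℝ) ≤ K σ x y / σ ^ 2 := (div_pos (K_pos σ x y) (by positivity)).le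
          exact mul_le_mul (mul_le_mul_of_nonneg_left hy hk) hy (norm_nonneg y)
            (by nlinarith [norm_nonneg y])
      _ = R ^ 2 / σ ^ 2 * K σ x y := by ring
  simpa [integral_const_mul, F] using h1

/-- The Riesz identity: `LF` is `σ⁻² • innerSL (G x)`. -/
lemma LF_eq (hσ : 0 < σ) (hae : ∀ᵐ y ∂Q₀, ‖y‖ ≤ R) (x : E) :
    LF Q₀ σ x = (σ ^ 2)⁻¹ • innerSL ℝ (G Q₀ σ x) := by
  have h1 : (fun y => (K σ x y / σ ^ 2) • innerSL ℝ y)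
      = fun y => innerSL ℝ ((σ ^ 2)⁻¹ • (K σ x y • y)) := by
    funext y
    rw [smul_innerSL, smul_smul, ← div_eq_inv_mul]
  have h2 : Integrable (fun y => (σ ^ 2)⁻¹ • (K σ x y • y)) Q₀ :=
    (intKy Q₀ hσ hae x).smul ((σ ^ 2)⁻¹)
  calc LF Q₀ σ x = ∫ y, innerSL ℝ ((σ ^ 2)⁻¹ • (K σ x y • y)) ∂Q₀ := by
        rw [LF, h1]
    _ = innerSL ℝ (∫ y, (σ ^ 2)⁻¹ • (K σ x y • y) ∂Q₀) :=
        ContinuousLinearMap.integral_comp_comm _ h2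
    _ = (σ ^ 2)⁻¹ • innerSL ℝ (G Q₀ σ x) := by
        rw [integral_smul, ← smul_innerSL]
        rfl

def grad (s : ℝ) (x : E) : E := (s ^ 2 * F Q₀ s x)⁻¹ • G Q₀ s x

lemma hasGradientAt_logF (hσ : 0 < σ) (hae : ∀ᵐ y ∂Q₀, ‖y‖ ≤ R) (hR : 0 ≤ R) (x : E) :
    HasGradientAt (fun x => Real.log (F Q₀ σ x)) (grad Q₀ σ x) x := by
  have hP := F_pos Q₀ hσ hae x
  have hlog : HasFDerivAt (fun x => Real.log (F Q₀ σ x))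
      ((F Q₀ σ x)⁻¹ • LF Q₀ σ x) x := (hasFDerivAt_F Q₀ hσ hae hR x).log hP.ne'
  rw [hasGradientAt_iff_hasFDerivAt]
  have hid : (toDual ℝ (EuclideanSpace ℝ (Fin d))) (grad Q₀ σ x)
      = (F Q₀ σ x)⁻¹ • LF Q₀ σ x := by
    rw [LF_eq Q₀ hσ hae x, smul_comm, smul_innerSL, smul_innerSL]
    have : (toDual ℝ (EuclideanSpace ℝ (Fin d))) (grad Q₀ σ x)
        = innerSL ℝ (grad Q₀ σ x) := by
      ext v
      simp [InnerProductSpace.toDual_apply_apply]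
    rw [this]
    congr 1
    rw [grad, smul_smul, mul_inv]
  rw [hid]
  exact hlog

lemma hasFDerivAt_grad (hσ : 0 < σ) (hae : ∀ᵐ y ∂Q₀, ‖y‖ ≤ R) (hR : 0 ≤ R) (x : E) :
    HasFDerivAt (grad Q₀ σ)
      ((σ ^ 2 * F Q₀ σ x)⁻¹ • LG Q₀ σ x +
        (-((σ ^ 2 * F Q₀ σ x) ^ 2)⁻¹ • (σ ^ 2 • LF Q₀ σ x)).smulRight (G Q₀ σ x)) x := by
  have hP := F_pos Q₀ hσ hae x
  have hu : HasFDerivAt (fun x => σ ^ 2 * F Q₀ σ x) (σ ^ 2 • LF Q₀ σ x) x :=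
    (hasFDerivAt_F Q₀ hσ hae hR x).const_mul _
  have huz : σ ^ 2 * F Q₀ σ x ≠ 0 := by positivity
  have hc := (hasDerivAt_inv huz).comp_hasFDerivAt x hu
  exact hc.smul (hasFDerivAt_G Q₀ hσ hae hR x)

lemma norm_D_le (hσ : 0 < σ) (hae : ∀ᵐ y ∂Q₀, ‖y‖ ≤ R) (hR : 0 ≤ R) (x : E) :
    ‖(σ ^ 2 * F Q₀ σ x)⁻¹ • LG Q₀ σ x +
        (-((σ ^ 2 * F Q₀ σ x) ^ 2)⁻¹ • (σ ^ 2 • LF Q₀ σ x)).smulRight (G Q₀ σ x)‖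
      ≤ 2 * R ^ 2 / σ ^ 4 := by
  have hP := F_pos Q₀ hσ hae x
  set P := F Q₀ σ x with hPdef
  have hs2 : (0:ℝ) < σ ^ 2 := by positivity
  have h1 : ‖(σ ^ 2 * P)⁻¹ • LG Q₀ σ x‖ ≤ R ^ 2 / σ ^ 4 := by
    rw [norm_smul (β := EuclideanSpace ℝ (Fin d) →L[ℝ] EuclideanSpace ℝ (Fin d))
        ((σ ^ 2 * P)⁻¹) (LG Q₀ σ x),
      Real.norm_eq_abs, abs_of_pos (by positivity)]
    calc (σ ^ 2 * P)⁻¹ * ‖LG Q₀ σ x‖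
        ≤ (σ ^ 2 * P)⁻¹ * (R ^ 2 / σ ^ 2 * P) := by
          gcongr
          exact norm_LG_le Q₀ hσ hae hR x
      _ = R ^ 2 / σ ^ 4 := by field_simp
  have h2 : ‖(-((σ ^ 2 * P) ^ 2)⁻¹ • (σ ^ 2 • LF Q₀ σ x)).smulRight (G Q₀ σ x)‖
      ≤ R ^ 2 / σ ^ 4 := by
    rw [ContinuousLinearMap.norm_smulRight_apply,
      norm_smul (β := EuclideanSpace ℝ (Fin d) →L[ℝ] ℝ)
        (-((σ ^ 2 * P) ^ 2)⁻¹) (σ ^ 2 • LF Q₀ σ x),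
      norm_smul (β := EuclideanSpace ℝ (Fin d) →L[ℝ] ℝ) (σ ^ 2) (LF Q₀ σ x),
      Real.norm_eq_abs, Real.norm_eq_abs, abs_neg, abs_of_pos (by positivity),
      abs_of_pos hs2]
    calc ((σ ^ 2 * P) ^ 2)⁻¹ * (σ ^ 2 * ‖LF Q₀ σ x‖) * ‖G Q₀ σ x‖
        ≤ ((σ ^ 2 * P) ^ 2)⁻¹ * (σ ^ 2 * (R / σ ^ 2 * P)) * (R * P) := by
          gcongr
          · exact norm_LF_le Q₀ hσ hae x
          · exact norm_G_le Q₀ hσ hae x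
      _ = R ^ 2 / σ ^ 4 := by field_simp
  calc ‖(σ ^ 2 * P)⁻¹ • LG Q₀ σ x +
        (-((σ ^ 2 * P) ^ 2)⁻¹ • (σ ^ 2 • LF Q₀ σ x)).smulRight (G Q₀ σ x)‖
      ≤ ‖(σ ^ 2 * P)⁻¹ • LG Q₀ σ x‖ +
        ‖(-((σ ^ 2 * P) ^ 2)⁻¹ • (σ ^ 2 • LF Q₀ σ x)).smulRight (G Q₀ σ x)‖ :=
        norm_add_le _ _
    _ ≤ R ^ 2 / σ ^ 4 + R ^ 2 / σ ^ 4 := add_le_add h1 h2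
    _ = 2 * R ^ 2 / σ ^ 4 := by ring


end Stmt5

open Stmt5

/-- Hessian bound of Theorem 3.8 for the Gaussian smoothing of a
bounded-support distribution. -/
theorem stmt5 {d : ℕ}
    (Q₀ : Measure (EuclideanSpace ℝ (Fin d))) [IsProbabilityMeasure Q₀]
    (R σ : ℝ) (hσ : 0 < σ)
    (hsupp : Q₀ (Metric.closedBall (0 : EuclideanSpace ℝ (Fin d)) R)ᶜ = 0)
    (qσ g : EuclideanSpace ℝ (Fin d) → ℝ)
    (hq : ∀ x, qσ x = ∫ y, Real.exp (-‖x - y‖ ^ 2 / (2 * σ ^ 2)) ∂Q₀)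
    (hg : ∀ x, g x = Real.log (qσ x) + ‖x‖ ^ 2 / (2 * σ ^ 2)) :
    Differentiable ℝ g ∧ Differentiable ℝ (gradient g) ∧
      ∀ x, ‖fderiv ℝ (gradient g) x‖ ≤ 2 * R ^ 2 / σ ^ 4 := by
  have hR : 0 ≤ R := by
    by_contra h
    push_neg at h
    rw [Metric.closedBall_eq_empty.2 h, Set.compl_empty] at hsupp
    simp at hsupp
  have hae : ∀ᵐ y ∂Q₀, ‖y‖ ≤ R := by
    rw [ae_iff]
    convert hsupp using 2
    ext y
    simp [mem_closedBall_zero_iff]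
  have hgF : g = fun x => Real.log (F Q₀ σ x) := by
    funext x
    have hpt : ∀ y : EuclideanSpace ℝ (Fin d), Real.exp (-‖x - y‖ ^ 2 / (2 * σ ^ 2))
        = Real.exp (-‖x‖ ^ 2 / (2 * σ ^ 2)) * K σ x y := by
      intro y
      rw [K, ← Real.exp_add]
      congr 1
      have hns : ‖x - y‖ ^ 2 = ‖x‖ ^ 2 - 2 * ⟪x, y⟫_ℝ + ‖y‖ ^ 2 :=
        norm_sub_sq_real x y
      rw [hns]
      field_simp
      ring
    have hq2 : qσ x = Real.exp (-‖x‖ ^ 2 / (2 * σ ^ 2)) * F Q₀ σ x := by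
      rw [hq x]
      simp_rw [hpt]
      rw [F, MeasureTheory.integral_const_mul]
    rw [hg x, hq2, Real.log_mul (Real.exp_ne_zero _) (F_pos Q₀ hσ hae x).ne',
      Real.log_exp]
    ring
  have hGrad : ∀ x, HasGradientAt g (grad Q₀ σ x) x := by
    intro x
    rw [hgF]
    exact hasGradientAt_logF Q₀ hσ hae hR x
  have hgrad_eq : gradient g = grad Q₀ σ := funext fun x => (hGrad x).gradient
  refine ⟨fun x => ((hGrad x).hasFDerivAt).differentiableAt, ?_, ?_⟩
  · rw [hgrad_eq]
    exact fun x => (hasFDerivAt_grad Q₀ hσ hae hR x).differentiableAt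
  · intro x
    rw [hgrad_eq, (hasFDerivAt_grad Q₀ hσ hae hR x).fderiv]
    exact norm_D_le Q₀ hσ hae hR x
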